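/- Suppose the map Γ ↦ (s − Γ) f_Γ′(Γ)/f_Γ(Γ) is nondecreasing on [0, s) and α ∈ ( −s f_Γ′(0)/((1 − s f_Γ′(0)) θ_min), 1/θ_min ). Let Γ be a solution of the liquidation ODE on [τ, T*] with Γ(τ) = 0 and Γ(u) ∈ [0, s) for u ∈ [τ, T*). Then for every u ∈ [τ, T*), Γ(u) ≤ s [ 1 − exp( ((1 − α θ_min) · inf_{t ∈ [τ, T*]} f_t′(t)) / (α θ_min f_t(T*) Λ(τ)) · (u − τ) ) ] < s, where Λ(τ) = 1 + ((1 − α θ_min)/(α θ_min)) s f_Γ′(0); in particular, by continuity, Γ(T*) < s. -/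

import Mathlib

open Set

noncomputable section

lemma deriv_nonpos_of_antitoneOn {f : ℝ → ℝ} {d t : ℝ} (hf : AntitoneOn f (Ici 0))
    (ht : 0 ≤ t) (hd : HasDerivAt f d t) : d ≤ 0 := by
  have h : HasDerivWithinAt f d (Ioi t) t := hd.hasDerivWithinAt
  rw [hasDerivWithinAt_iff_tendsto_slope] at h
  have hset : Ioi t \ {t} = Ioi t := Set.diff_singleton_eq_self (by simp)
  rw [hset] at h
  refine le_of_tendsto h ?_
  filter_upwards [self_mem_nhdsWithin] with x hx
  have hx' : t < x := hx
  have hle : f x ≤ f t := hf ht (le_trans ht hx'.le) hx'.le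
  rw [slope_def_field]
  have : x - t > 0 := by linarith
  exact div_nonpos_of_nonpos_of_nonneg (by linarith) this.le

/-- **Exponential bound on the liquidations (proof of Lemma 3.1).**
If `Γ` solves the liquidation ODE on `[τ, T*]` with `Γ(τ) = 0` and
`Γ(u) ∈ [0, s)` for `u ∈ [τ, T*)`, then for every `u ∈ [τ, T*)`,
`Γ(u) ≤ s (1 - exp(((1 - αθmin) inf_{t∈[τ,T*]} ft'(t))/(αθmin ft(T*) Λ(τ)) (u - τ))) < s`,
where `Λ(τ) = 1 + ((1 - αθmin)/(αθmin)) s fΓ'(0)`; in particular, by continuity,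
`Γ(T*) < s`. -/
theorem liquidation_exponential_bound
    (s α θmin τ Tstar : ℝ)
    (hs : 0 < s)
    (hθmin : 0 < θmin) (hα : 0 < α) (hαθ : α * θmin < 1)
    (hτ : 0 ≤ τ) (hτT : τ ≤ Tstar)
    (ft fΓ : ℝ → ℝ)
    (hftC : ContDiff ℝ 1 ft) (hftanti : AntitoneOn ft (Ici 0))
    (hftmem : ∀ t ∈ Ici (0 : ℝ), ft t ∈ Ioc (0 : ℝ) 1) (hft0 : ft 0 = 1)
    (hfΓC : ContDiff ℝ 2 fΓ) (hfΓanti : Antitone fΓ)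
    (hfΓpos : ∀ γ, 0 < fΓ γ) (hfΓ0 : fΓ 0 = 1)
    -- key assumption on the inverse demand function
    (hmono : MonotoneOn (fun γ => (s - γ) * deriv fΓ γ / fΓ γ) (Ico 0 s))
    -- key assumption on the risk-weight
    (hαmem : α ∈ Ioo (-(s * deriv fΓ 0) / ((1 - s * deriv fΓ 0) * θmin)) (1 / θmin))
    -- the map `Z` (the bank is at the regulatory threshold on `[τ, T*]`)
    (Z : ℝ → ℝ → ℝ)
    (hZ : ∀ t γ, Z t γ = ((1 - α * θmin) * (s - γ)) / (α * θmin * ft t * fΓ γ))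
    -- a solution of the liquidation ODE on `[τ, T*]` with `Γ(τ) = 0`,
    -- staying in `[0, s)` on `[τ, T*)`
    (Γ Γ' : ℝ → ℝ)
    (hΓτ : Γ τ = 0)
    (hrange : ∀ u ∈ Ico τ Tstar, Γ u ∈ Ico 0 s)
    (hderiv : ∀ t ∈ Icc τ Tstar, HasDerivAt Γ (Γ' t) t)
    (hODE : ∀ t ∈ Icc τ Tstar, Γ' t =
      -(Z t (Γ t) * deriv ft t * fΓ (Γ t)) /
        (1 + Z t (Γ t) * ft t * deriv fΓ (Γ t))) :
    (∀ u ∈ Ico τ Tstar,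
      Γ u ≤ s * (1 - Real.exp
        ((1 - α * θmin) * sInf (deriv ft '' Icc τ Tstar) /
          (α * θmin * ft Tstar *
            (1 + (1 - α * θmin) / (α * θmin) * (s * deriv fΓ 0))) * (u - τ))) ∧
      s * (1 - Real.exp
        ((1 - α * θmin) * sInf (deriv ft '' Icc τ Tstar) /
          (α * θmin * ft Tstar *
            (1 + (1 - α * θmin) / (α * θmin) * (s * deriv fΓ 0))) * (u - τ))) < s) ∧
    Γ Tstar < s := by
  have hαθ0 : 0 < α * θmin := mul_pos hα hθmin
  have hK1 : 0 < 1 - α * θmin := by linarith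
  have hftdiff : Differentiable ℝ ft := hftC.differentiable one_ne_zero
  have hfΓdiff : Differentiable ℝ fΓ := hfΓC.differentiable two_ne_zero
  have hd0 : deriv fΓ 0 ≤ 0 :=
    deriv_nonpos_of_antitoneOn (hfΓanti.antitoneOn _) le_rfl (hfΓdiff 0).hasDerivAt
  have hT0 : (0:ℝ) ≤ Tstar := le_trans hτ hτT
  have hftT : 0 < ft Tstar := (hftmem Tstar hT0).1
  set m := sInf (deriv ft '' Icc τ Tstar) with hm_def
  set Λ := 1 + (1 - α * θmin) / (α * θmin) * (s * deriv fΓ 0) with hΛ_def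
  set c := (1 - α * θmin) * m / (α * θmin * ft Tstar * Λ) with hc_def
  -- positivity of Λ
  have hsd0 : s * deriv fΓ 0 ≤ 0 := mul_nonpos_of_nonneg_of_nonpos hs.le hd0
  have hden : 0 < (1 - s * deriv fΓ 0) * θmin := by nlinarith
  have h1 : -(s * deriv fΓ 0) < α * ((1 - s * deriv fΓ 0) * θmin) :=
    (div_lt_iff₀ hden).mp hαmem.1
  have hnum : 0 < α * θmin + (1 - α * θmin) * (s * deriv fΓ 0) := by nlinarith
  have hΛpos : 0 < Λ := by
    have hΛeq : Λ = (α * θmin + (1 - α * θmin) * (s * deriv fΓ 0)) / (α * θmin) := by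
      rw [hΛ_def]; field_simp [hαθ0.ne']
    rw [hΛeq]; exact div_pos hnum hαθ0
  -- properties of m
  have hcompact : IsCompact (deriv ft '' Icc τ Tstar) :=
    isCompact_Icc.image (hftC.continuous_deriv le_rfl)
  have hmle : ∀ t ∈ Icc τ Tstar, m ≤ deriv ft t := fun t ht =>
    csInf_le hcompact.bddBelow (mem_image_of_mem _ ht)
  have hm0 : m ≤ 0 :=
    le_trans (hmle τ ⟨le_rfl, hτT⟩)
      (deriv_nonpos_of_antitoneOn hftanti hτ (hftdiff τ).hasDerivAt)
  have hKpos : 0 < (1 - α * θmin) / (α * θmin) := div_pos hK1 hαθ0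
  -- key derivative bound
  have key : ∀ t ∈ Ico τ Tstar, Γ' t ≤ -c * (s - Γ t) := by
    intro t ht
    obtain ⟨hγ0, hγs⟩ := hrange t ht
    have htIcc : t ∈ Icc τ Tstar := ⟨ht.1, ht.2.le⟩
    have ht0 : (0:ℝ) ≤ t := le_trans hτ ht.1
    have hftt : 0 < ft t := (hftmem t ht0).1
    have hfΓγ : 0 < fΓ (Γ t) := hfΓpos (Γ t)
    have hR : s * deriv fΓ 0 ≤ (s - Γ t) * deriv fΓ (Γ t) / fΓ (Γ t) := by
      have := hmono ⟨le_rfl, hs⟩ ⟨hγ0, hγs⟩ hγ0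
      simpa [hfΓ0] using this
    have hD : 0 < 1 + (1 - α * θmin) / (α * θmin) *
        ((s - Γ t) * deriv fΓ (Γ t) / fΓ (Γ t)) := by
      have h2 : (1 - α * θmin) / (α * θmin) * (s * deriv fΓ 0) ≤
          (1 - α * θmin) / (α * θmin) * ((s - Γ t) * deriv fΓ (Γ t) / fΓ (Γ t)) :=
        mul_le_mul_of_nonneg_left hR hKpos.le
      rw [hΛ_def] at hΛpos; linarith
    have hZval : ((1 - α * θmin) * (s - Γ t)) / (α * θmin * ft t * fΓ (Γ t)) *
        ft t * deriv fΓ (Γ t) = (1 - α * θmin) / (α * θmin) *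
        ((s - Γ t) * deriv fΓ (Γ t) / fΓ (Γ t)) := by
      field_simp
    have hb : 1 + ((1 - α * θmin) * (s - Γ t)) / (α * θmin * ft t * fΓ (Γ t)) *
        ft t * deriv fΓ (Γ t) ≠ 0 := by
      rw [hZval]; exact hD.ne'
    have hform : Γ' t = ((1 - α * θmin) / (α * θmin) * (s - Γ t) * (-(deriv ft t))) /
        (ft t * (1 + (1 - α * θmin) / (α * θmin) *
          ((s - Γ t) * deriv fΓ (Γ t) / fΓ (Γ t)))) := by
      rw [hODE t htIcc, hZ, div_eq_div_iff hb (mul_pos hftt hD).ne']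
      field_simp
    rw [hform]
    have hrhs : -c * (s - Γ t) =
        ((1 - α * θmin) / (α * θmin) * (s - Γ t) * (-m)) / (ft Tstar * Λ) := by
      rw [hc_def]; field_simp
    rw [hrhs]
    have hKs : 0 ≤ (1 - α * θmin) / (α * θmin) * (s - Γ t) :=
      mul_nonneg hKpos.le (by linarith)
    apply div_le_div₀ (mul_nonneg hKs (by linarith))
      (mul_le_mul_of_nonneg_left (neg_le_neg (hmle t htIcc)) hKs)
      (mul_pos hftT hΛpos)
    have hftle : ft Tstar ≤ ft t := hftanti ht0 hT0 ht.2.le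
    have hΛle : Λ ≤ 1 + (1 - α * θmin) / (α * θmin) *
        ((s - Γ t) * deriv fΓ (Γ t) / fΓ (Γ t)) := by
      have h2 := mul_le_mul_of_nonneg_left hR hKpos.le
      rw [hΛ_def]; linarith
    exact mul_le_mul hftle hΛle hΛpos.le hftt.le
  -- the Gronwall-type argument
  set g : ℝ → ℝ := fun u => (s - Γ u) * Real.exp (-c * (u - τ)) with hg_def
  have hgderiv : ∀ u ∈ Icc τ Tstar, HasDerivAt g
      ((-(Γ' u)) * Real.exp (-c * (u - τ)) +
        (s - Γ u) * (Real.exp (-c * (u - τ)) * (-c))) u := by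
    intro u hu
    have h1 : HasDerivAt (fun u => s - Γ u) (-(Γ' u)) u := (hderiv u hu).const_sub s
    have h2 : HasDerivAt (fun u : ℝ => -c * (u - τ)) (-c) u := by
      simpa using ((hasDerivAt_id u).sub_const τ).const_mul (-c)
    exact h1.mul h2.exp
  have hgmono : MonotoneOn g (Icc τ Tstar) := by
    apply monotoneOn_of_deriv_nonneg (convex_Icc τ Tstar)
    · exact fun u hu => (hgderiv u hu).continuousAt.continuousWithinAt
    · intro u hu
      rw [interior_Icc] at hu
      exact ((hgderiv u (Ioo_subset_Icc_self hu)).differentiableAt).differentiableWithinAt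
    · intro u hu
      rw [interior_Icc] at hu
      rw [(hgderiv u (Ioo_subset_Icc_self hu)).deriv]
      have hb := key u ⟨hu.1.le, hu.2⟩
      have hE := (Real.exp_pos (-c * (u - τ)))
      nlinarith [mul_le_mul_of_nonneg_right hb hE.le]
  have hmain : ∀ u ∈ Icc τ Tstar, Γ u ≤ s * (1 - Real.exp (c * (u - τ))) := by
    intro u hu
    have h := hgmono (left_mem_Icc.mpr hτT) hu hu.1
    have hgτ : g τ = s := by simp [hg_def, hΓτ]
    rw [hgτ] at h
    have hE2 := Real.exp_pos (c * (u - τ))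
    have hEne : Real.exp (-c * (u - τ)) = (Real.exp (c * (u - τ)))⁻¹ := by
      rw [neg_mul, Real.exp_neg]
    have h' : s ≤ (s - Γ u) * Real.exp (-c * (u - τ)) := h
    rw [hEne, ← div_eq_mul_inv] at h'
    have hkey : s * Real.exp (c * (u - τ)) ≤ s - Γ u := (le_div_iff₀ hE2).mp h'
    have hid : s * (1 - Real.exp (c * (u - τ))) = s - s * Real.exp (c * (u - τ)) := by ring
    linarith
  refine ⟨fun u hu => ⟨hmain u ⟨hu.1, hu.2.le⟩, ?_⟩, ?_⟩
  · have hE : 0 < Real.exp (c * (u - τ)) := Real.exp_pos _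
    have hse : 0 < s * Real.exp (c * (u - τ)) := mul_pos hs hE
    have hid : s * (1 - Real.exp (c * (u - τ))) = s - s * Real.exp (c * (u - τ)) := by ring
    linarith
  · have h := hmain Tstar (right_mem_Icc.mpr hτT)
    have hE : 0 < Real.exp (c * (Tstar - τ)) := Real.exp_pos _
    have hse : 0 < s * Real.exp (c * (Tstar - τ)) := mul_pos hs hE
    have hid : s * (1 - Real.exp (c * (Tstar - τ))) = s - s * Real.exp (c * (Tstar - τ)) := by ring
    linarith
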